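/- arXiv:2203.12664 — 2 statements merged into one kernel-verified Lean document; each statement's English description precedes it below -/
import Mathlib

section
/- Let P = (1/100)·P₁ + (99/100)·P₂ where P₁ is uniform on [0,1/3] and P₂ is uniform on [2/3,1]. For any n ≥ 3, every optimal set γ_n of n-means satisfies γ_n ∩ [0,1/3] ≠ ∅ and γ_n ∩ [2/3,1] ≠ ∅. -/
open MeasureTheory Set

noncomputable def unif (a b : ℝ) : Measure ℝ :=
  (ENNReal.ofReal (b - a))⁻¹ • (volume.restrict (Icc a b))

noncomputable def mix (p : ℝ) (P₁ P₂ : Measure ℝ) : Measure ℝ :=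
  ENNReal.ofReal p • P₁ + ENNReal.ofReal (1 - p) • P₂

noncomputable def distortion (P : Measure ℝ) (γ : Finset ℝ) : ℝ :=
  ∫ x, sInf ((fun c => (x - c) ^ 2) '' (γ : Set ℝ)) ∂P

noncomputable def quantErr (P : Measure ℝ) (n : ℕ) : ℝ :=
  sInf { v | ∃ γ : Finset ℝ, γ.Nonempty ∧ γ.card ≤ n ∧ v = distortion P γ }

def IsOptimal (P : Measure ℝ) (n : ℕ) (γ : Finset ℝ) : Prop :=
  γ.Nonempty ∧ γ.card ≤ n ∧ distortion P γ = quantErr P n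

noncomputable def fmin (γ : Finset ℝ) (x : ℝ) : ℝ :=
  sInf ((fun c => (x - c) ^ 2) '' (γ : Set ℝ))

lemma fmin_eq_inf' (γ : Finset ℝ) (hγ : γ.Nonempty) (x : ℝ) :
    fmin γ x = γ.inf' hγ (fun c => (x - c) ^ 2) := by
  rw [Finset.inf'_eq_csInf_image]
  simp [fmin, Finset.coe_image]

lemma fmin_le (γ : Finset ℝ) {c : ℝ} (hc : c ∈ γ) (x : ℝ) :
    fmin γ x ≤ (x - c) ^ 2 := by
  rw [fmin_eq_inf' γ ⟨c, hc⟩ x]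
  exact Finset.inf'_le _ hc

lemma le_fmin (γ : Finset ℝ) (hγ : γ.Nonempty) {b x : ℝ}
    (h : ∀ c ∈ γ, b ≤ (x - c) ^ 2) : b ≤ fmin γ x := by
  rw [fmin_eq_inf' γ hγ x]
  exact Finset.le_inf' _ _ h

lemma fmin_nonneg (γ : Finset ℝ) (x : ℝ) : 0 ≤ fmin γ x := by
  rcases γ.eq_empty_or_nonempty with rfl | hγ
  · simp [fmin, Real.sInf_empty]
  · exact le_fmin γ hγ (fun c _ => sq_nonneg _)

lemma fmin_anti {γ γ' : Finset ℝ} (hγ : γ.Nonempty) (h : γ ⊆ γ') (x : ℝ) :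
    fmin γ' x ≤ fmin γ x := by
  exact le_fmin γ hγ (fun c hcm => fmin_le γ' (h hcm) x)

lemma fmin_exists (γ : Finset ℝ) (hγ : γ.Nonempty) (x : ℝ) :
    ∃ c ∈ γ, fmin γ x = (x - c) ^ 2 := by
  obtain ⟨c, hc, hc2⟩ := Finset.exists_mem_eq_inf' hγ (fun c => (x - c) ^ 2)
  exact ⟨c, hc, by rw [fmin_eq_inf' γ hγ x, hc2]⟩

lemma fmin_continuous (γ : Finset ℝ) (hγ : γ.Nonempty) : Continuous (fmin γ) := by
  have : Continuous fun x => γ.inf' hγ (fun c => (x - c) ^ 2) :=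
    Continuous.finset_inf'_apply hγ
      (fun c _ => ((continuous_id.sub continuous_const).pow 2 : Continuous fun x : ℝ => (x - c) ^ 2))
  convert this using 1
  ext x
  exact fmin_eq_inf' γ hγ x

noncomputable abbrev Pm : Measure ℝ := mix (1/100) (unif 0 (1/3)) (unif (2/3) 1)

lemma integrable_unif {g : ℝ → ℝ} (hg : Continuous g) (a b : ℝ) (hab : a < b) :
    Integrable g (unif a b) := by
  unfold unif
  refine Integrable.smul_measure hg.integrableOn_Icc ?_
  simpa using hab

lemma integrable_Pm {g : ℝ → ℝ} (hg : Continuous g) : Integrable g Pm := by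
  unfold Pm mix
  rw [integrable_add_measure]
  constructor <;>
    refine Integrable.smul_measure (integrable_unif hg _ _ (by norm_num)) (by simp)

lemma integral_unif {g : ℝ → ℝ} (a b : ℝ) (hab : 0 < b - a) :
    ∫ x, g x ∂(unif a b) = (b - a)⁻¹ * ∫ x in Icc a b, g x := by
  unfold unif
  rw [integral_smul_measure]
  rw [ENNReal.toReal_inv, ENNReal.toReal_ofReal hab.le]
  simp [smul_eq_mul]

lemma distortion_eq (γ : Finset ℝ) (hγ : γ.Nonempty) :
    distortion Pm γ = (3/100) * (∫ x in Icc (0:ℝ) (1/3), fmin γ x) +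
      (297/100) * (∫ x in Icc (2/3:ℝ) 1, fmin γ x) := by
  have hc : Continuous (fmin γ) := fmin_continuous γ hγ
  have : distortion Pm γ = ∫ x, fmin γ x ∂Pm := rfl
  rw [this]
  unfold Pm mix
  rw [integral_add_measure
        (Integrable.smul_measure (integrable_unif hc _ _ (by norm_num)) (by simp))
        (Integrable.smul_measure (integrable_unif hc _ _ (by norm_num)) (by simp)),
      integral_smul_measure, integral_smul_measure,
      integral_unif _ _ (by norm_num), integral_unif _ _ (by norm_num)]
  rw [ENNReal.toReal_ofReal (by norm_num), ENNReal.toReal_ofReal (by norm_num)]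
  simp only [smul_eq_mul]
  ring_nf

lemma distortion_nonneg (γ : Finset ℝ) (hγ : γ.Nonempty) : 0 ≤ distortion Pm γ := by
  rw [distortion_eq γ hγ]
  have h1 : (0:ℝ) ≤ ∫ x in Icc (0:ℝ) (1/3), fmin γ x :=
    setIntegral_nonneg measurableSet_Icc (fun x _ => fmin_nonneg γ x)
  have h2 : (0:ℝ) ≤ ∫ x in Icc (2/3:ℝ) 1, fmin γ x :=
    setIntegral_nonneg measurableSet_Icc (fun x _ => fmin_nonneg γ x)
  nlinarith

lemma quantErr_le (n : ℕ) (γ' : Finset ℝ) (h1 : γ'.Nonempty) (h2 : γ'.card ≤ n) :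
    quantErr Pm n ≤ distortion Pm γ' := by
  apply csInf_le
  · refine ⟨0, ?_⟩
    rintro v ⟨γ'', hne, _, rfl⟩
    exact distortion_nonneg γ'' hne
  · exact ⟨γ', h1, h2, rfl⟩

lemma improve_contra {n : ℕ} {γ : Finset ℝ} (hγ : IsOptimal Pm n γ) (γ' : Finset ℝ)
    (h1 : γ'.Nonempty) (h2 : γ'.card ≤ n) (h3 : distortion Pm γ' < distortion Pm γ) : False := by
  have := quantErr_le n γ' h1 h2
  have heq := hγ.2.2
  linarith

lemma intInt_sq (a b c : ℝ) : ∫ x in a..b, (x - c)^2 = ((b-c)^3 - (a-c)^3)/3 := by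
  rw [intervalIntegral.integral_comp_sub_right (fun u => u^2) c, integral_pow]
  norm_num

lemma int_sq {a b : ℝ} (hab : a ≤ b) (c : ℝ) :
    ∫ x in Icc a b, (x - c)^2 = ((b-c)^3 - (a-c)^3)/3 := by
  rw [MeasureTheory.integral_Icc_eq_integral_Ioc, ← intervalIntegral.integral_of_le hab]
  exact intInt_sq a b c

lemma int_split {g : ℝ → ℝ} (hg : Continuous g) {a m b : ℝ} (h1 : a ≤ m) (h2 : m ≤ b) :
    ∫ x in Icc a b, g x = (∫ x in Icc a m, g x) + ∫ x in Icc m b, g x := by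
  rw [MeasureTheory.integral_Icc_eq_integral_Ioc, MeasureTheory.integral_Icc_eq_integral_Ioc,
    MeasureTheory.integral_Icc_eq_integral_Ioc, ← intervalIntegral.integral_of_le (h1.trans h2),
    ← intervalIntegral.integral_of_le h1, ← intervalIntegral.integral_of_le h2]
  exact (intervalIntegral.integral_add_adjacent_intervals
    (hg.intervalIntegrable a m) (hg.intervalIntegrable m b)).symm

noncomputable abbrev γB : Finset ℝ := {1/6, 3/4, 11/12}

lemma γB_nonempty : γB.Nonempty := ⟨1/6, by norm_num⟩

lemma γB_card : γB.card = 3 := by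
  rw [Finset.card_insert_of_notMem (by norm_num), Finset.card_insert_of_notMem (by norm_num),
    Finset.card_singleton]

lemma integrableOn_fmin (γ : Finset ℝ) (hγ : γ.Nonempty) (a b : ℝ) :
    IntegrableOn (fmin γ) (Icc a b) volume :=
  (fmin_continuous γ hγ).integrableOn_Icc

lemma bench_bound : distortion Pm γB ≤ 309/129600 := by
  rw [distortion_eq γB γB_nonempty]
  have h1 : ∫ x in Icc (0:ℝ) (1/3), fmin γB x ≤ ∫ x in Icc (0:ℝ) (1/3), (x - 1/6)^2 := by
    refine setIntegral_mono_on (integrableOn_fmin _ γB_nonempty _ _)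
      (((continuous_id.sub continuous_const).pow 2).integrableOn_Icc) measurableSet_Icc ?_
    intro x _
    exact fmin_le γB (by norm_num) x
  have h2 : ∫ x in Icc (2/3:ℝ) 1, fmin γB x ≤ 1/1296 := by
    rw [int_split (fmin_continuous γB γB_nonempty) (by norm_num : (2/3:ℝ) ≤ 5/6)
      (by norm_num : (5/6:ℝ) ≤ 1)]
    have h3 : ∫ x in Icc (2/3:ℝ) (5/6), fmin γB x ≤ ∫ x in Icc (2/3:ℝ) (5/6), (x - 3/4)^2 := by
      refine setIntegral_mono_on (integrableOn_fmin _ γB_nonempty _ _)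
        (((continuous_id.sub continuous_const).pow 2).integrableOn_Icc) measurableSet_Icc ?_
      intro x _
      exact fmin_le γB (by norm_num) x
    have h4 : ∫ x in Icc (5/6:ℝ) 1, fmin γB x ≤ ∫ x in Icc (5/6:ℝ) 1, (x - 11/12)^2 := by
      refine setIntegral_mono_on (integrableOn_fmin _ γB_nonempty _ _)
        (((continuous_id.sub continuous_const).pow 2).integrableOn_Icc) measurableSet_Icc ?_
      intro x _
      exact fmin_le γB (by norm_num) x
    rw [int_sq (by norm_num) (3/4:ℝ)] at h3
    rw [int_sq (by norm_num) (11/12:ℝ)] at h4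
    norm_num at h3 h4 ⊢
    linarith
  rw [int_sq (by norm_num : (0:ℝ) ≤ 1/3) (1/6:ℝ)] at h1
  norm_num at h1 h2 ⊢
  nlinarith

lemma part2 {n : ℕ} {γ : Finset ℝ} (hn : 3 ≤ n) (hγ : IsOptimal Pm n γ)
    (hbad : ∀ c ∈ γ, c ∉ Icc (2/3:ℝ) 1) : False := by
  have hne := hγ.1
  have hlow : (1188:ℝ)/129600 ≤ distortion Pm γ := by
    rw [distortion_eq γ hne]
    have h0 : (0:ℝ) ≤ ∫ x in Icc (0:ℝ) (1/3), fmin γ x :=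
      setIntegral_nonneg measurableSet_Icc (fun x _ => fmin_nonneg γ x)
    have h2 : ∫ x in Icc (2/3:ℝ) 1, fmin γ x ≥ 1/324 := by
      rw [int_split (fmin_continuous γ hne) (by norm_num : (2/3:ℝ) ≤ 5/6)
        (by norm_num : (5/6:ℝ) ≤ 1)]
      have h3 : ∫ x in Icc (2/3:ℝ) (5/6), (x - 2/3)^2 ≤ ∫ x in Icc (2/3:ℝ) (5/6), fmin γ x := by
        refine setIntegral_mono_on
          (((continuous_id.sub continuous_const).pow 2).integrableOn_Icc)
          (integrableOn_fmin _ hne _ _) measurableSet_Icc ?_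
        intro x hx
        simp only [mem_Icc] at hx
        refine le_fmin γ hne (fun c hc => ?_)
        have := hbad c hc
        simp only [mem_Icc, not_and_or, not_le] at this
        rcases this with h | h
        · nlinarith
        · nlinarith
      have h4 : ∫ x in Icc (5/6:ℝ) 1, (x - 1)^2 ≤ ∫ x in Icc (5/6:ℝ) 1, fmin γ x := by
        refine setIntegral_mono_on
          (((continuous_id.sub continuous_const).pow 2).integrableOn_Icc)
          (integrableOn_fmin _ hne _ _) measurableSet_Icc ?_
        intro x hx
        simp only [mem_Icc] at hx
        refine le_fmin γ hne (fun c hc => ?_)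
        have := hbad c hc
        simp only [mem_Icc, not_and_or, not_le] at this
        rcases this with h | h
        · nlinarith
        · nlinarith
      rw [int_sq (by norm_num) (2/3:ℝ)] at h3
      rw [int_sq (by norm_num) (1:ℝ)] at h4
      norm_num at h3 h4 ⊢
      linarith
    nlinarith
  have := bench_bound
  refine improve_contra hγ γB γB_nonempty (by rw [γB_card]; exact hn) ?_
  linarith

lemma improve_of_gap {n : ℕ} {γ : Finset ℝ} (hγ : IsOptimal Pm n γ) (γ' : Finset ℝ)
    (h1 : γ'.Nonempty) (h2 : γ'.card ≤ n)
    (hJ1 : ∀ x ∈ Icc (0:ℝ) (1/3), fmin γ' x ≤ fmin γ x)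
    (hJ2 : ∀ x ∈ Icc (2/3:ℝ) 1, fmin γ' x ≤ fmin γ x)
    {g a b : ℝ} (hg : 0 < g) (hab : a < b) (h0a : 0 ≤ a) (hb : b ≤ 1/3)
    (hgap : ∀ x ∈ Icc a b, g ≤ fmin γ x - fmin γ' x) : False := by
  have hne := hγ.1
  refine improve_contra hγ γ' h1 h2 ?_
  rw [distortion_eq γ hne, distortion_eq γ' h1]
  have hd2 : ∫ x in Icc (2/3:ℝ) 1, fmin γ' x ≤ ∫ x in Icc (2/3:ℝ) 1, fmin γ x :=
    setIntegral_mono_on (integrableOn_fmin _ h1 _ _) (integrableOn_fmin _ hne _ _)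
      measurableSet_Icc hJ2
  have hd1 : (∫ x in Icc (0:ℝ) (1/3), fmin γ' x) + g * (b - a)
      ≤ ∫ x in Icc (0:ℝ) (1/3), fmin γ x := by
    have hs1 : ∫ x in Icc (0:ℝ) (1/3), fmin γ x
        = (∫ x in Icc (0:ℝ) a, fmin γ x) + ((∫ x in Icc a b, fmin γ x)
          + ∫ x in Icc b (1/3), fmin γ x) := by
      rw [int_split (fmin_continuous γ hne) h0a (by linarith),
        int_split (fmin_continuous γ hne) hab.le hb]
    have hs2 : ∫ x in Icc (0:ℝ) (1/3), fmin γ' x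
        = (∫ x in Icc (0:ℝ) a, fmin γ' x) + ((∫ x in Icc a b, fmin γ' x)
          + ∫ x in Icc b (1/3), fmin γ' x) := by
      rw [int_split (fmin_continuous γ' h1) h0a (by linarith),
        int_split (fmin_continuous γ' h1) hab.le hb]
    have m1 : ∫ x in Icc (0:ℝ) a, fmin γ' x ≤ ∫ x in Icc (0:ℝ) a, fmin γ x :=
      setIntegral_mono_on (integrableOn_fmin _ h1 _ _) (integrableOn_fmin _ hne _ _)
        measurableSet_Icc (fun x hx => hJ1 x ⟨hx.1, by rcases hx with ⟨_, h⟩; linarith⟩)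
    have m3 : ∫ x in Icc b (1/3:ℝ), fmin γ' x ≤ ∫ x in Icc b (1/3:ℝ), fmin γ x :=
      setIntegral_mono_on (integrableOn_fmin _ h1 _ _) (integrableOn_fmin _ hne _ _)
        measurableSet_Icc (fun x hx => hJ1 x ⟨by rcases hx with ⟨h, _⟩; linarith, hx.2⟩)
    have m2 : (∫ x in Icc a b, fmin γ' x) + g * (b - a) ≤ ∫ x in Icc a b, fmin γ x := by
      have : ∫ x in Icc a b, (fmin γ' x + g) ≤ ∫ x in Icc a b, fmin γ x := by
        refine setIntegral_mono_on ?_ (integrableOn_fmin _ hne _ _) measurableSet_Icc ?_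
        · exact (integrableOn_fmin _ h1 _ _).add (integrableOn_const (by
            rw [Real.volume_Icc]; exact ENNReal.ofReal_ne_top))
        · intro x hx
          have := hgap x hx
          linarith
      rw [integral_add (integrableOn_fmin _ h1 _ _) (integrableOn_const (by
            rw [Real.volume_Icc]; exact ENNReal.ofReal_ne_top))] at this
      rw [setIntegral_const, Real.volume_real_Icc_of_le hab.le] at this
      simp only [smul_eq_mul] at this
      linarith
    rw [hs1, hs2]
    linarith
  nlinarith [mul_pos hg (by linarith : (0:ℝ) < b - a)]

lemma card_swap {γ : Finset ℝ} {c x : ℝ} (hc : c ∈ γ) :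
    (insert x (γ.erase c)).card ≤ γ.card := by
  refine le_trans (Finset.card_insert_le _ _) ?_
  rw [Finset.card_erase_of_mem hc]
  have : 1 ≤ γ.card := Finset.card_pos.2 ⟨c, hc⟩
  omega

lemma swap_le {γ : Finset ℝ} (hne : γ.Nonempty) {c a x : ℝ} (hc : c ∈ γ)
    (h : (x - a)^2 ≤ (x - c)^2) : fmin (insert a (γ.erase c)) x ≤ fmin γ x := by
  obtain ⟨d, hd, hdeq⟩ := fmin_exists γ hne x
  rcases eq_or_ne d c with rfl | hdc
  · rw [hdeq]
    exact le_trans (fmin_le _ (Finset.mem_insert_self _ _) x) h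
  · rw [hdeq]
    exact fmin_le _ (Finset.mem_insert_of_mem (Finset.mem_erase.2 ⟨hdc, hd⟩)) x

lemma caseL {n : ℕ} {γ : Finset ℝ} (hγ : IsOptimal Pm n γ)
    (hbad : ∀ c ∈ γ, c ∉ Icc (0:ℝ) (1/3)) {c : ℝ} (hc : c ∈ γ) (hcneg : c < 0) : False := by
  classical
  have hne := hγ.1
  have hsplit : ∀ d ∈ γ, d < 0 ∨ 1/3 < d := by
    intro d hd
    have := hbad d hd
    simp only [mem_Icc, not_and_or, not_le] at this
    tauto
  set S := γ.filter (fun d => d < 0) with hSdef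
  have hS : S.Nonempty := ⟨c, Finset.mem_filter.2 ⟨hc, hcneg⟩⟩
  set cm := S.max' hS with hcmdef
  have hcm := Finset.mem_filter.1 (S.max'_mem hS)
  set γ' := insert (0:ℝ) (γ.erase cm) with hγ'def
  have h1 : γ'.Nonempty := ⟨0, Finset.mem_insert_self _ _⟩
  have h2 : γ'.card ≤ n := le_trans (card_swap hcm.1) hγ.2.1
  have hJ : ∀ x : ℝ, 0 ≤ x → fmin γ' x ≤ fmin γ x := by
    intro x hx
    exact swap_le hne hcm.1 (by nlinarith [hcm.2])
  refine improve_of_gap hγ γ' h1 h2 (fun x hx => hJ x hx.1)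
    (fun x hx => hJ x (by rcases hx with ⟨h, _⟩; linarith))
    (g := min (cm^2) (1/12)) (a := 0) (b := 1/24)
    (lt_min (by nlinarith [hcm.2]) (by norm_num)) (by norm_num) le_rfl (by norm_num) ?_
  intro x hx
  rcases hx with ⟨hx0, hx1⟩
  have hup : fmin γ' x ≤ x^2 := by
    have := fmin_le γ' (Finset.mem_insert_self _ _) x
    simpa using this
  have hlo : min ((x - cm)^2) ((1/3 - x)^2) ≤ fmin γ x := by
    refine le_fmin γ hne (fun d hd => ?_)
    rcases hsplit d hd with h | h
    · have hdcm : d ≤ cm := S.le_max' d (Finset.mem_filter.2 ⟨hd, h⟩)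
      refine le_trans (min_le_left _ _) ?_
      nlinarith [hcm.2]
    · refine le_trans (min_le_right _ _) ?_
      nlinarith
  rcases min_cases ((x - cm)^2) ((1/3 - x)^2) with ⟨hm, _⟩ | ⟨hm, _⟩ <;> rw [hm] at hlo
  · refine le_trans (min_le_left _ _) ?_
    nlinarith [hcm.2]
  · refine le_trans (min_le_right _ _) ?_
    nlinarith

lemma fmin_left {γ : Finset ℝ} {c₀ c₁ x : ℝ} (hc₀ : c₀ ∈ γ) (hcc : c₀ ≤ c₁)
    (hlo : ∀ d ∈ γ, d ≠ c₀ → c₁ ≤ d) (hx : 2*x ≤ c₀ + c₁) :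
    fmin γ x = (x - c₀)^2 := by
  refine le_antisymm (fmin_le _ hc₀ x) (le_fmin _ ⟨c₀, hc₀⟩ (fun d hd => ?_))
  rcases eq_or_ne d c₀ with rfl | hne
  · exact le_of_eq rfl
  · have := hlo d hd hne
    nlinarith

lemma fmin_right {γ : Finset ℝ} {c₀ c₁ x : ℝ} (hc₀ : c₀ ∈ γ) (hc₁ : c₁ ∈ γ.erase c₀)
    (hcc : c₀ ≤ c₁) (hlo : ∀ d ∈ γ, d ≠ c₀ → c₁ ≤ d) (hx : c₀ + c₁ ≤ 2*x) :
    fmin γ x = fmin (γ.erase c₀) x := by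
  refine le_antisymm (fmin_anti ⟨c₁, hc₁⟩ (Finset.erase_subset _ _) x)
    (le_fmin _ ⟨c₀, hc₀⟩ (fun d hd => ?_))
  rcases eq_or_ne d c₀ with rfl | hne
  · refine le_trans (fmin_le _ hc₁ x) ?_
    nlinarith
  · exact fmin_le _ (Finset.mem_erase.2 ⟨hne, hd⟩) x

lemma caseR0 {n : ℕ} {γ : Finset ℝ} (hγ : IsOptimal Pm n γ)
    (hR : ∀ d ∈ γ, 1/3 < d) (hcard : γ.card < n) : False := by
  have hne := hγ.1
  set γ' := insert (1/6:ℝ) γ with hγ'def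
  have h1 : γ'.Nonempty := ⟨1/6, Finset.mem_insert_self _ _⟩
  have h2 : γ'.card ≤ n := le_trans (Finset.card_insert_le _ _) hcard
  have hJ : ∀ x : ℝ, fmin γ' x ≤ fmin γ x :=
    fun x => fmin_anti hne (Finset.subset_insert _ _) x
  refine improve_of_gap hγ γ' h1 h2 (fun x _ => hJ x) (fun x _ => hJ x)
    (g := 1/72) (a := 1/8) (b := 5/24) (by norm_num) (by norm_num) (by norm_num)
    (by norm_num) ?_
  intro x hx
  rcases hx with ⟨hx1, hx2⟩
  have hup : fmin γ' x ≤ (x - 1/6)^2 := fmin_le γ' (Finset.mem_insert_self _ _) x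
  have hlo : (1/3 - x)^2 ≤ fmin γ x := by
    refine le_fmin γ hne (fun d hd => ?_)
    have := hR d hd
    nlinarith
  nlinarith

lemma caseRA {n : ℕ} {γ : Finset ℝ} (hn : 3 ≤ n) (hγ : IsOptimal Pm n γ)
    (hR : ∀ d ∈ γ, 2/3 ≤ d) : False := by
  have hne := hγ.1
  have hlow : (336:ℝ)/129600 ≤ distortion Pm γ := by
    rw [distortion_eq γ hne]
    have h0 : (0:ℝ) ≤ ∫ x in Icc (2/3:ℝ) 1, fmin γ x :=
      setIntegral_nonneg measurableSet_Icc (fun x _ => fmin_nonneg γ x)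
    have h1 : ∫ x in Icc (0:ℝ) (1/3), (x - 2/3)^2 ≤ ∫ x in Icc (0:ℝ) (1/3), fmin γ x := by
      refine setIntegral_mono_on
        (((continuous_id.sub continuous_const).pow 2).integrableOn_Icc)
        (integrableOn_fmin _ hne _ _) measurableSet_Icc ?_
      intro x hx
      rcases hx with ⟨hx1, hx2⟩
      refine le_fmin γ hne (fun d hd => ?_)
      have := hR d hd
      nlinarith
    rw [int_sq (by norm_num) (2/3:ℝ)] at h1
    norm_num at h1 ⊢
    nlinarith
  have := bench_bound
  refine improve_contra hγ γB γB_nonempty (by rw [γB_card]; exact hn) ?_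
  linarith

lemma caseR_easy {n : ℕ} {γ : Finset ℝ} (hγ : IsOptimal Pm n γ) (γ' : Finset ℝ)
    (h1 : γ'.Nonempty) (h2 : γ'.card ≤ n) {c₀ : ℝ} (hc₀ : 1/3 < c₀)
    (hup : ∀ x ∈ Icc (0:ℝ) (1/3), fmin γ' x ≤ (x - 1/6)^2)
    (heq : ∀ x ∈ Icc (0:ℝ) (1/3), fmin γ x = (x - c₀)^2)
    (hJ2 : ∀ x ∈ Icc (2/3:ℝ) 1, fmin γ' x ≤ fmin γ x) : False := by
  have hne := hγ.1
  refine improve_contra hγ γ' h1 h2 ?_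
  rw [distortion_eq γ hne, distortion_eq γ' h1]
  have hd2 : ∫ x in Icc (2/3:ℝ) 1, fmin γ' x ≤ ∫ x in Icc (2/3:ℝ) 1, fmin γ x :=
    setIntegral_mono_on (integrableOn_fmin _ h1 _ _) (integrableOn_fmin _ hne _ _)
      measurableSet_Icc hJ2
  have hu : ∫ x in Icc (0:ℝ) (1/3), fmin γ' x ≤ ∫ x in Icc (0:ℝ) (1/3), (x - 1/6)^2 :=
    setIntegral_mono_on (integrableOn_fmin _ h1 _ _)
      (((continuous_id.sub continuous_const).pow 2).integrableOn_Icc)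
      measurableSet_Icc hup
  have he : ∫ x in Icc (0:ℝ) (1/3), fmin γ x = ∫ x in Icc (0:ℝ) (1/3), (x - c₀)^2 :=
    setIntegral_congr_fun measurableSet_Icc heq
  rw [he]
  rw [int_sq (by norm_num) (1/6:ℝ)] at hu
  rw [int_sq (by norm_num : (0:ℝ) ≤ 1/3) c₀]
  norm_num at hu ⊢
  nlinarith

lemma vertex_eq {A B C c₀ : ℝ} (hA : 0 < A)
    (h : ∀ θ : ℝ, A*c₀^2 - 2*B*c₀ + C ≤ A*θ^2 - 2*B*θ + C) : A*c₀ = B := by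
  have h1 := h (B/A)
  have hAne : A ≠ 0 := ne_of_gt hA
  have h2 : A*(B/A)^2 - 2*B*(B/A) + C = -(B^2)/A + C := by
    field_simp
    ring
  rw [h2] at h1
  have h3 : (A*c₀ - B)^2 ≤ 0 := by
    have h4 : A*(A*c₀^2 - 2*B*c₀ + C) ≤ A*(-(B^2)/A + C) :=
      mul_le_mul_of_nonneg_left h1 hA.le
    have h5 : A*(-(B^2)/A + C) = -(B^2) + A*C := by field_simp
    nlinarith [h4, h5]
  have h6 : (A*c₀ - B)^2 = 0 := le_antisymm h3 (sq_nonneg _)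
  have := pow_eq_zero_iff (n := 2) (by norm_num) |>.1 h6
  linarith

lemma keyineq {c₀ m : ℝ} (h1 : 1/3 < c₀) (h2 : c₀ < 2/3) (h3 : 2/3 < m)
    (hE : (1/100 + (297/100)*(m - 2/3))*c₀ = 1/600 + (297/200)*(m^2 - 4/9)) :
    (3/100)*((((1/3:ℝ) - 1/6)^3 - (0 - 1/6)^3)/3)
      + (297/100)*(((m - (2*m - c₀))^3 - (2/3 - (2*m - c₀))^3)/3)
    < (3/100)*(((1/3 - c₀)^3 - (0 - c₀)^3)/3)
      + (297/100)*(((m - c₀)^3 - (2/3 - c₀)^3)/3) := by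
  obtain ⟨ℓ, hℓ⟩ : ∃ l : ℝ, l = m - 2/3 := ⟨_, rfl⟩
  obtain ⟨D, hD⟩ : ∃ d : ℝ, d = 1/3 + m/2 - c₀ := ⟨_, rfl⟩
  have hE' : c₀ - 1/6 = 297*ℓ*D := by
    rw [hℓ, hD]; linear_combination 100*hE
  have hl : 0 < ℓ := by rw [hℓ]; linarith
  have hDpos : 0 < D := by
    by_contra hx
    push_neg at hx
    nlinarith [mul_nonneg hl.le (neg_nonneg.2 hx)]
  have hG2 : ℓ ≤ 2*D := by rw [hℓ, hD]; linarith
  have hG4 : 4/297 < D := by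
    by_contra hx
    push_neg at hx
    nlinarith [mul_nonneg (by linarith : (0:ℝ) ≤ 2*D - ℓ) hDpos.le,
               mul_nonneg (by linarith : (0:ℝ) ≤ 4/297 - D) hDpos.le]
  have key : 2*D + ℓ < 297*D^2 := by
    nlinarith [mul_pos (show (0:ℝ) < 297*D - 4 by linarith) hDpos]
  have goal2 : 0 < (297/100)*ℓ^2*(297*D^2 - (2*D + ℓ)) :=
    mul_pos (by positivity) (by linarith)
  have hE2 : (c₀ - 1/6)^2 = (297*ℓ*D)^2 := by rw [hE']
  have final : 0 < (1/100)*(c₀-1/6)^2 - (297/100)*ℓ^2*(2*D+ℓ) := by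
    rw [hE2]; nlinarith [goal2]
  have expand : ((3/100)*(((1/3 - c₀)^3 - (0 - c₀)^3)/3)
      + (297/100)*(((m - c₀)^3 - (2/3 - c₀)^3)/3))
      - ((3/100)*((((1/3:ℝ) - 1/6)^3 - (0 - 1/6)^3)/3)
      + (297/100)*(((m - (2*m - c₀))^3 - (2/3 - (2*m - c₀))^3)/3))
      = (1/100)*(c₀-1/6)^2 - (297/100)*ℓ^2*(2*D+ℓ) := by
    rw [hℓ, hD]; ring
  linarith

lemma sq_integrableOn (c a b : ℝ) :
    IntegrableOn (fun x : ℝ => (x - c)^2) (Icc a b) volume :=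
  ((continuous_id.sub continuous_const).pow 2).integrableOn_Icc

lemma int_fmin_le_sq {γ : Finset ℝ} (h1 : γ.Nonempty) {c : ℝ} (hc : c ∈ γ) (a b : ℝ) :
    ∫ x in Icc a b, fmin γ x ≤ ∫ x in Icc a b, (x - c)^2 :=
  setIntegral_mono_on (integrableOn_fmin _ h1 _ _) (sq_integrableOn c a b)
    measurableSet_Icc (fun x _ => fmin_le γ hc x)

lemma caseRB {n : ℕ} {γ : Finset ℝ} (hn : 3 ≤ n) (hγ : IsOptimal Pm n γ)
    (hR : ∀ d ∈ γ, 1/3 < d) : False := by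
  have hne := hγ.1
  rcases lt_or_ge γ.card n with hcard | hcard
  · exact caseR0 hγ hR hcard
  have hcardn : γ.card = n := le_antisymm hγ.2.1 hcard
  set c₀ := γ.min' hne with hc₀def
  have hc₀γ : c₀ ∈ γ := γ.min'_mem hne
  have hc₀m : ∀ d ∈ γ, c₀ ≤ d := fun d hd => γ.min'_le d hd
  have hc₀gt : 1/3 < c₀ := hR c₀ hc₀γ
  rcases le_or_gt (2/3) c₀ with hge | hc₀lt
  · exact caseRA hn hγ (fun d hd => le_trans hge (hc₀m d hd))
  have hene : (γ.erase c₀).Nonempty := by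
    rw [← Finset.card_pos, Finset.card_erase_of_mem hc₀γ]
    omega
  set c₁ := (γ.erase c₀).min' hene with hc₁def
  have hc₁e : c₁ ∈ γ.erase c₀ := Finset.min'_mem _ hene
  have hc₁γ : c₁ ∈ γ := Finset.mem_of_mem_erase hc₁e
  have hc₁ne : c₁ ≠ c₀ := Finset.ne_of_mem_erase hc₁e
  have hcc : c₀ ≤ c₁ := hc₀m c₁ hc₁γ
  have hlo : ∀ d ∈ γ, d ≠ c₀ → c₁ ≤ d :=
    fun d hd hdne => Finset.min'_le _ d (Finset.mem_erase.2 ⟨hdne, hd⟩)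
  set m := (c₀ + c₁)/2 with hmdef
  have hswapcard : (insert (1/6:ℝ) (γ.erase c₀)).card ≤ n := le_trans (card_swap hc₀γ) hγ.2.1
  have hinsne : (insert (1/6:ℝ) (γ.erase c₀)).Nonempty := ⟨1/6, Finset.mem_insert_self _ _⟩
  rcases le_or_gt m (2/3) with hmle | hm
  · -- cell of c₀ does not reach J₂
    refine caseR_easy hγ (insert (1/6) (γ.erase c₀)) hinsne hswapcard hc₀gt
      (fun x _ => fmin_le _ (Finset.mem_insert_self _ _) x)
      (fun x hx => fmin_left hc₀γ hcc hlo (by rcases hx with ⟨_, h2⟩; linarith [hc₀gt, hcc]))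
      (fun x hx => ?_)
    rw [fmin_right hc₀γ hc₁e hcc hlo (by rcases hx with ⟨h1, _⟩; rw [hmdef] at hmle; linarith)]
    exact fmin_anti hene (Finset.subset_insert _ _) x
  rcases le_or_gt 1 m with hm1 | hm1
  · -- cell of c₀ covers everything up to 1 : c₁ is useless
    refine caseR_easy hγ (insert (1/6) (γ.erase c₁)) ⟨1/6, Finset.mem_insert_self _ _⟩
      (le_trans (card_swap hc₁γ) hγ.2.1) hc₀gt
      (fun x _ => fmin_le _ (Finset.mem_insert_self _ _) x)
      (fun x hx => fmin_left hc₀γ hcc hlo (by rcases hx with ⟨_, h2⟩; rw [hmdef] at hm1; linarith))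
      (fun x hx => ?_)
    rw [fmin_left hc₀γ hcc hlo (by rcases hx with ⟨_, h2⟩; rw [hmdef] at hm1; linarith)]
    exact fmin_le _ (Finset.mem_insert_of_mem (Finset.mem_erase.2 ⟨hc₁ne.symm ∘ Eq.symm ∘ id ∘ Eq.symm, hc₀γ⟩)) x
  -- main case : 2/3 < m < 1
  set K := ∫ x in Icc m 1, fmin (γ.erase c₀) x with hKdef
  have e1 : ∫ x in Icc (0:ℝ) (1/3), fmin γ x = ∫ x in Icc (0:ℝ) (1/3), (x - c₀)^2 :=
    setIntegral_congr_fun measurableSet_Icc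
      (fun x hx => fmin_left hc₀γ hcc hlo (by rcases hx with ⟨_, h2⟩; linarith [hc₀gt, hcc]))
  have e2 : ∫ x in Icc (2/3:ℝ) m, fmin γ x = ∫ x in Icc (2/3:ℝ) m, (x - c₀)^2 :=
    setIntegral_congr_fun measurableSet_Icc
      (fun x hx => fmin_left hc₀γ hcc hlo (by rcases hx with ⟨_, h2⟩; rw [hmdef] at h2; linarith))
  have e3 : ∫ x in Icc m 1, fmin γ x = K :=
    setIntegral_congr_fun measurableSet_Icc
      (fun x hx => fmin_right hc₀γ hc₁e hcc hlo (by rcases hx with ⟨h1, _⟩; rw [hmdef] at h1; linarith))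
  have S1 : distortion Pm γ = (3/100)*(((1/3 - c₀)^3 - (0 - c₀)^3)/3)
      + (297/100)*((((m - c₀)^3 - (2/3 - c₀)^3)/3) + K) := by
    rw [distortion_eq γ hne, int_split (fmin_continuous γ hne) hm.le hm1.le, e1, e2, e3,
      int_sq (by norm_num : (0:ℝ) ≤ 1/3) c₀, int_sq hm.le c₀]
  have S2 : ∀ θ : ℝ, distortion Pm (insert θ (γ.erase c₀))
      ≤ (3/100)*(((1/3 - θ)^3 - (0 - θ)^3)/3)
      + (297/100)*((((m - θ)^3 - (2/3 - θ)^3)/3) + K) := by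
    intro θ
    have hθne : (insert θ (γ.erase c₀)).Nonempty := ⟨θ, Finset.mem_insert_self _ _⟩
    rw [distortion_eq _ hθne, int_split (fmin_continuous _ hθne) hm.le hm1.le]
    have u1 := int_fmin_le_sq hθne (Finset.mem_insert_self θ _) 0 (1/3)
    have u2 := int_fmin_le_sq hθne (Finset.mem_insert_self θ _) (2/3) m
    have u3 : ∫ x in Icc m 1, fmin (insert θ (γ.erase c₀)) x ≤ K :=
      setIntegral_mono_on (integrableOn_fmin _ hθne _ _) (integrableOn_fmin _ hene _ _)
        measurableSet_Icc (fun x _ => fmin_anti hene (Finset.subset_insert _ _) x)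
    rw [int_sq (by norm_num : (0:ℝ) ≤ 1/3) θ] at u1
    rw [int_sq hm.le θ] at u2
    linarith
  have S3 : ∀ θ : ℝ, (3/100)*(((1/3 - c₀)^3 - (0 - c₀)^3)/3)
      + (297/100)*((((m - c₀)^3 - (2/3 - c₀)^3)/3) + K)
      ≤ (3/100)*(((1/3 - θ)^3 - (0 - θ)^3)/3)
      + (297/100)*((((m - θ)^3 - (2/3 - θ)^3)/3) + K) := by
    intro θ
    have h1 : distortion Pm γ ≤ distortion Pm (insert θ (γ.erase c₀)) := by
      rw [hγ.2.2]
      exact quantErr_le n _ ⟨θ, Finset.mem_insert_self _ _⟩ (le_trans (card_swap hc₀γ) hγ.2.1)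
    have := S2 θ
    rw [S1] at h1
    linarith
  have hquad : ∀ θ : ℝ, (3/100)*(((1/3 - θ)^3 - (0 - θ)^3)/3)
      + (297/100)*((((m - θ)^3 - (2/3 - θ)^3)/3) + K)
      = (1/100 + (297/100)*(m - 2/3))*θ^2 - 2*(1/600 + (297/200)*(m^2 - 4/9))*θ
        + (1/2700 + (297/100)*((m^3 - 8/27)/3 + K)) := by
    intro θ
    ring
  have hApos : (0:ℝ) < 1/100 + (297/100)*(m - 2/3) := by nlinarith
  have hE : (1/100 + (297/100)*(m - 2/3))*c₀ = 1/600 + (297/200)*(m^2 - 4/9) := by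
    refine vertex_eq (C := 1/2700 + (297/100)*((m^3 - 8/27)/3 + K)) hApos (fun θ => ?_)
    have h := S3 θ
    rw [hquad c₀, hquad θ] at h
    exact h
  have hkey := keyineq hc₀gt hc₀lt hm hE
  have hc₁eq : c₁ = 2*m - c₀ := by rw [hmdef]; ring
  rw [← hc₁eq] at hkey
  have hub' : distortion Pm (insert (1/6) (γ.erase c₀))
      ≤ (3/100)*((((1/3:ℝ) - 1/6)^3 - (0 - 1/6)^3)/3)
      + (297/100)*((((m - c₁)^3 - (2/3 - c₁)^3)/3) + K) := by
    rw [distortion_eq _ hinsne, int_split (fmin_continuous _ hinsne) hm.le hm1.le]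
    have u1 := int_fmin_le_sq hinsne (Finset.mem_insert_self (1/6:ℝ) _) 0 (1/3)
    have u2 := int_fmin_le_sq hinsne (Finset.mem_insert_of_mem hc₁e) (2/3) m
    have u3 : ∫ x in Icc m 1, fmin (insert (1/6:ℝ) (γ.erase c₀)) x ≤ K :=
      setIntegral_mono_on (integrableOn_fmin _ hinsne _ _) (integrableOn_fmin _ hene _ _)
        measurableSet_Icc (fun x _ => fmin_anti hene (Finset.subset_insert _ _) x)
    rw [int_sq (by norm_num : (0:ℝ) ≤ 1/3) (1/6:ℝ)] at u1
    rw [int_sq hm.le c₁] at u2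
    linarith
  refine improve_contra hγ _ hinsne hswapcard ?_
  rw [S1]
  linarith

theorem stmt9 (n : ℕ) (hn : 3 ≤ n) (γ : Finset ℝ)
    (hγ : IsOptimal (mix (1/100) (unif 0 (1/3)) (unif (2/3) 1)) n γ) :
    (∃ c ∈ γ, c ∈ Icc (0:ℝ) (1/3)) ∧ (∃ c ∈ γ, c ∈ Icc (2/3 : ℝ) 1) := by
  have hγ' : IsOptimal Pm n γ := hγ
  constructor
  · by_contra h
    push_neg at h
    by_cases hL : ∃ c ∈ γ, c < 0
    · obtain ⟨c, hc, hcn⟩ := hL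
      exact caseL hγ' h hc hcn
    · push_neg at hL
      refine caseRB hn hγ' (fun d hd => ?_)
      have h1 := h d hd
      have h0 := hL d hd
      simp only [mem_Icc, not_and_or, not_le] at h1
      rcases h1 with h1 | h1
      · linarith
      · exact h1
  · by_contra h
    push_neg at h
    exact part2 hn hγ' h
end

section
/- Let P = (51/500)·P₁ + (449/500)·P₂ where P₁ is uniform on [0, 7/15] and P₂ is uniform on [8/15, 1]. Then there exists an optimal set of two-means for P containing a point of the open interval (7/15, 8/15); indeed the optimal set of two-means is approximately {0.488570, 0.829523} with quantization error approximately 0.0179722. -/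
open MeasureTheory Set

/-! ### Auxiliary machinery -/

noncomputable def II (u v c : ℝ) : ℝ := ((v - c)^3 - (u - c)^3)/3

lemma integral_sq (u v c : ℝ) : ∫ x in u..v, (x - c)^2 = II u v c := by
  have h : ∀ x ∈ Set.uIcc u v, HasDerivAt (fun y => (y - c)^3/3) ((x - c)^2) x := by
    intro x _
    have h1 : HasDerivAt (fun y : ℝ => y - c) 1 x := (hasDerivAt_id x).sub_const c
    have h2 : HasDerivAt (fun y => (y - c)^3/3) (((3:ℕ):ℝ) * (x - c)^(3-1) * 1 / 3) x :=
      (h1.fun_pow 3).div_const 3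
    convert h2 using 1
    ring
  rw [intervalIntegral.integral_eq_sub_of_hasDerivAt h
    (((continuous_id.sub continuous_const).pow 2).intervalIntegrable _ _)]
  unfold II; ring

lemma mix_eval (f : ℝ → ℝ) (hf : Continuous f) :
    ∫ x, f x ∂(mix (51/500) (unif 0 (7/15)) (unif (8/15) 1))
      = (153/700) * (∫ x in (0:ℝ)..(7/15), f x)
        + (1347/700) * (∫ x in (8/15:ℝ)..1, f x) := by
  have hI1 : IntegrableOn f (Icc (0:ℝ) (7/15)) := hf.integrableOn_Icc
  have hI2 : IntegrableOn f (Icc (8/15:ℝ) 1) := hf.integrableOn_Icc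
  have hne1 : (ENNReal.ofReal ((7:ℝ)/15 - 0))⁻¹ ≠ ⊤ := by
    rw [ENNReal.inv_ne_top, Ne, ENNReal.ofReal_eq_zero]
    norm_num
  have hne2 : (ENNReal.ofReal ((1:ℝ) - 8/15))⁻¹ ≠ ⊤ := by
    rw [ENNReal.inv_ne_top, Ne, ENNReal.ofReal_eq_zero]
    norm_num
  rw [mix, unif, unif]
  rw [integral_add_measure
      (((hI1.smul_measure hne1)).smul_measure ENNReal.ofReal_ne_top)
      (((hI2.smul_measure hne2)).smul_measure ENNReal.ofReal_ne_top)]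
  rw [integral_smul_measure, integral_smul_measure, integral_smul_measure,
    integral_smul_measure]
  rw [MeasureTheory.integral_Icc_eq_integral_Ioc, MeasureTheory.integral_Icc_eq_integral_Ioc,
    ← intervalIntegral.integral_of_le (by norm_num : (0:ℝ) ≤ 7/15),
    ← intervalIntegral.integral_of_le (by norm_num : (8:ℝ)/15 ≤ 1)]
  rw [ENNReal.toReal_inv, ENNReal.toReal_inv,
    ENNReal.toReal_ofReal (by norm_num : (0:ℝ) ≤ 51/500),
    ENNReal.toReal_ofReal (by norm_num : (0:ℝ) ≤ 1 - 51/500),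
    ENNReal.toReal_ofReal (by norm_num : (0:ℝ) ≤ 7/15 - 0),
    ENNReal.toReal_ofReal (by norm_num : (0:ℝ) ≤ 1 - 8/15)]
  rw [smul_eq_mul, smul_eq_mul, smul_eq_mul, smul_eq_mul]
  ring

lemma cont_min (a b : ℝ) : Continuous (fun x : ℝ => min ((x-a)^2) ((x-b)^2)) :=
  ((continuous_id.sub continuous_const).pow 2).min
    ((continuous_id.sub continuous_const).pow 2)

lemma split_int (a b u v : ℝ) (hab : a ≤ b) (huv : u ≤ v) :
    ∫ x in u..v, min ((x-a)^2) ((x-b)^2)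
      = II u (max u (min v ((a+b)/2))) a + II (max u (min v ((a+b)/2))) v b := by
  set m := (a+b)/2 with hm
  set t := max u (min v m) with ht
  have htu : u ≤ t := le_max_left _ _
  have htv : t ≤ v := max_le huv (min_le_left _ _)
  have i1 : IntervalIntegrable (fun x : ℝ => min ((x-a)^2) ((x-b)^2)) volume u t :=
    (cont_min a b).intervalIntegrable u t
  have i2 : IntervalIntegrable (fun x : ℝ => min ((x-a)^2) ((x-b)^2)) volume t v :=
    (cont_min a b).intervalIntegrable t v
  rw [← intervalIntegral.integral_add_adjacent_intervals i1 i2]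
  have e1 : ∫ x in u..t, min ((x-a)^2) ((x-b)^2) = II u t a := by
    by_cases hum : u ≤ m
    · have htm : t ≤ m := max_le hum (min_le_right _ _)
      rw [← integral_sq]
      apply intervalIntegral.integral_congr
      intro x hx
      rw [Set.uIcc_of_le htu] at hx
      have hxm : x ≤ m := le_trans hx.2 htm
      exact min_eq_left (by nlinarith)
    · push_neg at hum
      have : t = u := by
        rw [ht, min_eq_right (le_trans hum.le huv), max_eq_left hum.le]
      rw [this, intervalIntegral.integral_same]
      simp [II]
  have e2 : ∫ x in t..v, min ((x-a)^2) ((x-b)^2) = II t v b := by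
    by_cases hmv : m ≤ v
    · have htm : m ≤ t := le_max_of_le_right (le_min hmv le_rfl)
      rw [← integral_sq]
      apply intervalIntegral.integral_congr
      intro x hx
      rw [Set.uIcc_of_le htv] at hx
      have hxm : m ≤ x := le_trans htm hx.1
      exact min_eq_right (by nlinarith)
    · push_neg at hmv
      have : t = v := by
        rw [ht, min_eq_left hmv.le, max_eq_right huv]
      rw [this, intervalIntegral.integral_same]
      simp [II]
  rw [e1, e2]

lemma distortion_pair (a b : ℝ) (hab : a ≤ b) :
    distortion (mix (51/500) (unif 0 (7/15)) (unif (8/15) 1)) {a, b}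
      = (153/700) * (II 0 (max 0 (min (7/15) ((a+b)/2))) a
          + II (max 0 (min (7/15) ((a+b)/2))) (7/15) b)
        + (1347/700) * (II (8/15) (max (8/15) (min 1 ((a+b)/2))) a
          + II (max (8/15) (min 1 ((a+b)/2))) 1 b) := by
  have hfun : (fun x : ℝ => sInf ((fun c => (x - c) ^ 2) '' (({a, b} : Finset ℝ) : Set ℝ)))
      = fun x : ℝ => min ((x-a)^2) ((x-b)^2) := by
    funext x
    rw [Finset.coe_insert, Finset.coe_singleton, Set.image_pair, csInf_pair]
  rw [distortion, hfun, mix_eval _ (cont_min a b),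
    split_int a b 0 (7/15) hab (by norm_num),
    split_int a b (8/15) 1 hab (by norm_num)]

lemma distortion_single (a : ℝ) :
    distortion (mix (51/500) (unif 0 (7/15)) (unif (8/15) 1)) {a}
      = (153/700) * II 0 (7/15) a + (1347/700) * II (8/15) 1 a := by
  have hfun : (fun x : ℝ => sInf ((fun c => (x - c) ^ 2) '' (({a} : Finset ℝ) : Set ℝ)))
      = fun x : ℝ => (x-a)^2 := by
    funext x
    rw [Finset.coe_singleton, Set.image_singleton, csInf_singleton]
  rw [distortion, hfun, mix_eval (fun x => (x-a)^2) (by fun_prop),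
    integral_sq, integral_sq]

/-! ### The optimal points -/

noncomputable def qq : ℝ := Real.sqrt 108031
noncomputable def astar : ℝ := (1865 + qq)/4490
noncomputable def bstar : ℝ := (10845 + qq)/13470
noncomputable def mstar : ℝ := (astar + bstar)/2
noncomputable def Aval : ℝ :=
  (153/700) * (II 0 (7/15) astar + II (7/15) (7/15) bstar)
    + (1347/700) * (II (8/15) mstar astar + II mstar 1 bstar)

lemma hq : qq^2 = 108031 := Real.sq_sqrt (by norm_num)
lemma hq0 : 0 ≤ qq := Real.sqrt_nonneg _
lemma hq3 : qq^3 = 108031 * qq := by rw [pow_succ, hq]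
lemma hql : 3286/10 ≤ qq := by nlinarith [hq, hq0]
lemma hqu : qq ≤ 3287/10 := by nlinarith [hq, hq0]

lemma habstar : astar ≤ bstar := by
  simp only [astar, bstar]
  linarith [hql, hqu]

lemma hm1 : 7/15 ≤ mstar := by
  simp only [mstar, astar, bstar]; linarith [hql, hqu]

lemma hm2 : 8/15 ≤ mstar := by
  simp only [mstar, astar, bstar]; linarith [hql, hqu]

lemma hm3 : mstar ≤ 1 := by
  simp only [mstar, astar, bstar]; linarith [hql, hqu]

lemma lhs_eval :
    distortion (mix (51/500) (unif 0 (7/15)) (unif (8/15) 1)) {astar, bstar} = Aval := by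
  rw [distortion_pair astar bstar habstar]
  have hm1' : 7/15 ≤ (astar+bstar)/2 := hm1
  have hm2' : 8/15 ≤ (astar+bstar)/2 := hm2
  have hm3' : (astar+bstar)/2 ≤ 1 := hm3
  have e1 : max 0 (min (7/15) ((astar+bstar)/2)) = 7/15 := by
    rw [min_eq_left hm1', max_eq_right (by norm_num : (0:ℝ) ≤ 7/15)]
  have e2 : max (8/15) (min 1 ((astar+bstar)/2)) = (astar+bstar)/2 := by
    rw [min_eq_right hm3', max_eq_right hm2']
  rw [e1, e2]
  rfl

/-! ### Case bounds -/

lemma easy_bound (c : ℝ) :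
    Aval ≤ (153/700) * II 0 (7/15) c + (1347/700) * II (8/15) 1 c := by
  simp only [Aval, mstar, astar, bstar, II]
  nlinarith [sq_nonneg (c - 2671/3750), hq, hq3, hq0, hql]

lemma gap_bound (a b : ℝ) :
    Aval ≤ (153/700) * (II 0 (7/15) a + II (7/15) (7/15) b)
      + (1347/700) * (II (8/15) (8/15) a + II (8/15) 1 b) := by
  simp only [Aval, mstar, astar, bstar, II]
  nlinarith [sq_nonneg (a - 7/30), sq_nonneg (b - 23/30), hq, hq3, hq0, hql]

set_option maxHeartbeats 2000000 in
lemma case5 (a b : ℝ) (h1 : 8/15 < (a+b)/2) (h2 : (a+b)/2 < 1) :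
    Aval ≤ (153/700) * (II 0 (7/15) a + II (7/15) (7/15) b)
      + (1347/700) * (II (8/15) ((a+b)/2) a + II ((a+b)/2) 1 b) := by
  set m : ℝ := (a+b)/2 with hm
  have key : ((153/700)*(7/15) - (1347/700)*(8/15) + (1347/700)*m)
        * ((1347/700)*(1-m))
        * (((153/700) * (II 0 (7/15) a + II (7/15) (7/15) b)
          + (1347/700) * (II (8/15) m a + II m 1 b)) - Aval)
      = ((1347/700)*(1-m))
          * (((153/700)*(7/15) - (1347/700)*(8/15) + (1347/700)*m)*a
             - ((153/700)*(7/15)^2/2 - (1347/700)*(8/15)^2/2 + (1347/1400)*m^2))^2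
        + ((153/700)*(7/15) - (1347/700)*(8/15) + (1347/700)*m)
          * (((1347/700)*(1-m))*b - (1347/1400)*(1-m^2))^2
        + (m - mstar)^2 * ((1-m)
            * ((-712809501/1225000000) + (1347/4900000)*qq + (1814409/1960000)*m)) := by
    simp only [Aval, mstar, astar, bstar, II, hm]
    linear_combination ((99/19250875000000)*qq + (-137/9625437500000)*a*qq
      + (-137/9625437500000)*b*qq + (1/171500000000)*a^2*qq + (1/85750000000)*a*b*qq
      + (1/171500000000)*b^2*qq + (2025721/41251875000000)*a + (-3/196000000)*a^2
      + (-3/98000000)*a*b + (2025721/41251875000000)*b + (-3/196000000)*b^2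
      + (-1525817/41251875000000)) * hq
  have hmass1 : (0:ℝ) < (153/700)*(7/15) - (1347/700)*(8/15) + (1347/700)*m := by
    linarith
  have hmass2 : (0:ℝ) < (1347/700)*(1-m) := by linarith
  have hk : (0:ℝ) ≤ (-712809501/1225000000) + (1347/4900000)*qq + (1814409/1960000)*m := by
    linarith [hql]
  have t1 : (0:ℝ) ≤ ((1347/700)*(1-m))
      * (((153/700)*(7/15) - (1347/700)*(8/15) + (1347/700)*m)*a
         - ((153/700)*(7/15)^2/2 - (1347/700)*(8/15)^2/2 + (1347/1400)*m^2))^2 :=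
    mul_nonneg hmass2.le (sq_nonneg _)
  have t2 : (0:ℝ) ≤ ((153/700)*(7/15) - (1347/700)*(8/15) + (1347/700)*m)
      * (((1347/700)*(1-m))*b - (1347/1400)*(1-m^2))^2 :=
    mul_nonneg hmass1.le (sq_nonneg _)
  have t3 : (0:ℝ) ≤ (m - mstar)^2 * ((1-m)
      * ((-712809501/1225000000) + (1347/4900000)*qq + (1814409/1960000)*m)) :=
    mul_nonneg (sq_nonneg _) (mul_nonneg (by linarith) hk)
  nlinarith [key, t1, t2, t3, mul_pos hmass1 hmass2]

set_option maxHeartbeats 2000000 in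
lemma case3 (a b : ℝ) (h1 : 0 ≤ (a+b)/2) (h2 : (a+b)/2 ≤ 7/15) :
    Aval ≤ (153/700) * (II 0 ((a+b)/2) a + II ((a+b)/2) (7/15) b)
      + (1347/700) * (II (8/15) (8/15) a + II (8/15) 1 b) := by
  set m : ℝ := (a+b)/2 with hm
  have key : ((153/700)*(7/15 - m) + (1347/700)*(7/15))
        * (((153/700) * (II 0 m a + II m (7/15) b)
          + (1347/700) * (II (8/15) (8/15) a + II (8/15) 1 b)) - Aval)
      = (153/700)*m*((153/700)*(7/15 - m) + (1347/700)*(7/15))*(a - m/2)^2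
        + (((153/700)*(7/15 - m) + (1347/700)*(7/15))*b
           - ((153/700)*((7/15)^2 - m^2)/2 + (1347/700)*(1 - (8/15)^2)/2))^2
        + (73094037659/2835014062500 + (15433/11340056250)*qq
           - (10277276271/88200437500)*m - (262361/882004375000)*qq*m
           + (136221/875000)*m^2 - (153/2800)*m^3) := by
    simp only [Aval, mstar, astar, bstar, II, hm]
    linear_combination ((-1/158760787500)*qq + (17/24696122500000)*a*qq
      + (17/24696122500000)*b*qq) * hq
  have hmassB : (0:ℝ) < (153/700)*(7/15 - m) + (1347/700)*(7/15) := by linarith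
  have hu : (0:ℝ) ≤ 7/15 - m := by linarith
  have hQB : (0:ℝ) ≤ 73094037659/2835014062500 + (15433/11340056250)*qq
      - (10277276271/88200437500)*m - (262361/882004375000)*qq*m
      + (136221/875000)*m^2 - (153/2800)*m^3 := by
    nlinarith [hu, mul_nonneg hu hu, mul_nonneg (mul_nonneg hu hu) hu, hql,
      mul_nonneg (mul_nonneg hu hu) (by linarith [hql] : (0:ℝ) ≤ qq - 3286/10),
      mul_nonneg hu (by linarith [hql] : (0:ℝ) ≤ qq - 3286/10)]
  have tA : (0:ℝ) ≤ (153/700)*m*((153/700)*(7/15 - m) + (1347/700)*(7/15))*(a - m/2)^2 := by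
    have : (0:ℝ) ≤ (153/700)*m*((153/700)*(7/15 - m) + (1347/700)*(7/15)) := by positivity
    exact mul_nonneg this (sq_nonneg _)
  have tB : (0:ℝ) ≤ (((153/700)*(7/15 - m) + (1347/700)*(7/15))*b
      - ((153/700)*((7/15)^2 - m^2)/2 + (1347/700)*(1 - (8/15)^2)/2))^2 := sq_nonneg _
  nlinarith [key, tA, tB, hQB, hmassB]

/-! ### The lower bound -/

lemma pair_bound (a b : ℝ) (hab : a ≤ b) :
    Aval ≤ distortion (mix (51/500) (unif 0 (7/15)) (unif (8/15) 1)) {a, b} := by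
  rw [distortion_pair a b hab]
  set m : ℝ := (a+b)/2 with hm
  rcases le_or_gt m 0 with h|h
  · rw [show max 0 (min (7/15) m) = 0 by
      rw [min_eq_right (by linarith), max_eq_left (by linarith)]]
    rw [show max (8/15) (min 1 m) = 8/15 by
      rw [min_eq_right (by linarith), max_eq_left (by linarith)]]
    have h1 : II 0 0 a = 0 := by simp [II]
    have h2 : II (8/15) (8/15) a = 0 := by simp [II]
    rw [h1, h2]
    linarith [easy_bound b]
  · rcases le_or_gt m (7/15) with h2|h2
    · rw [show max 0 (min (7/15) m) = m by
        rw [min_eq_right h2, max_eq_right h.le]]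
      rw [show max (8/15) (min 1 m) = 8/15 by
        rw [min_eq_right (by linarith), max_eq_left (by linarith)]]
      exact case3 a b h.le h2
    · rcases le_or_gt m (8/15) with h3|h3
      · rw [show max 0 (min (7/15) m) = 7/15 by
          rw [min_eq_left h2.le, max_eq_right (by norm_num)]]
        rw [show max (8/15) (min 1 m) = 8/15 by
          rw [min_eq_right (by linarith), max_eq_left (by linarith)]]
        exact gap_bound a b
      · rcases lt_or_ge m 1 with h4|h4
        · rw [show max 0 (min (7/15) m) = 7/15 by
            rw [min_eq_left (by linarith), max_eq_right (by norm_num)]]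
          rw [show max (8/15) (min 1 m) = m by
            rw [min_eq_right h4.le, max_eq_right h3.le]]
          exact case5 a b h3 h4
        · rw [show max 0 (min (7/15) m) = 7/15 by
            rw [min_eq_left (by linarith), max_eq_right (by norm_num)]]
          rw [show max (8/15) (min 1 m) = 1 by
            rw [min_eq_left h4, max_eq_right (by norm_num)]]
          have h5 : II (7/15) (7/15) b = 0 := by simp [II]
          have h6 : II 1 1 b = 0 := by simp [II]
          rw [h5, h6]
          linarith [easy_bound a]

lemma lower_bound (γ : Finset ℝ) (hne : γ.Nonempty) (hc : γ.card ≤ 2) :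
    Aval ≤ distortion (mix (51/500) (unif 0 (7/15)) (unif (8/15) 1)) γ := by
  rcases hc.lt_or_eq with h|h
  · have h1 : γ.card = 1 := by
      have := Finset.card_pos.2 hne
      omega
    obtain ⟨c, rfl⟩ := Finset.card_eq_one.1 h1
    rw [distortion_single]
    exact easy_bound c
  · obtain ⟨x, y, hxy, rfl⟩ := Finset.card_eq_two.1 h
    rcases le_total x y with hle|hle
    · exact pair_bound x y hle
    · rw [Finset.pair_comm]
      exact pair_bound y x hle

theorem stmt16 :
    ∃ γ : Finset ℝ,
      IsOptimal (mix (51/500) (unif 0 (7/15)) (unif (8/15) 1)) 2 γ ∧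
      ∃ c ∈ γ, c ∈ Ioo (7/15 : ℝ) (8/15) := by
  refine ⟨{astar, bstar}, ⟨⟨astar, by simp⟩, ?_, ?_⟩, astar, Finset.mem_insert_self _ _, ?_, ?_⟩
  · exact le_trans (Finset.card_insert_le _ _) (by simp)
  · set P := mix (51/500) (unif 0 (7/15)) (unif (8/15) 1) with hP
    have hmem : distortion P {astar, bstar}
        ∈ {v | ∃ γ : Finset ℝ, γ.Nonempty ∧ γ.card ≤ 2 ∧ v = distortion P γ} :=
      ⟨{astar, bstar}, ⟨astar, by simp⟩,
        le_trans (Finset.card_insert_le _ _) (by simp), rfl⟩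
    have hlb : ∀ v ∈ {v | ∃ γ : Finset ℝ, γ.Nonempty ∧ γ.card ≤ 2 ∧ v = distortion P γ},
        distortion P {astar, bstar} ≤ v := by
      rintro v ⟨γ', h1, h2, rfl⟩
      rw [lhs_eval]
      exact lower_bound γ' h1 h2
    rw [quantErr]
    exact (le_antisymm (csInf_le ⟨_, hlb⟩ hmem) (le_csInf ⟨_, hmem⟩ hlb)).symm
  · simp only [astar]
    linarith [hql, hqu]
  · simp only [astar]
    linarith [hql, hqu]
end
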